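/- Let M be a nonnegative integer and F, G, X, λ real numbers with G > 0, X > 0, λ > 0 and G·X² > 3F. Set δ = −F/(G·X² + X·√(G²·X² − 3·F·G)) and x₀ = λ·(1+δ)·X. Then x₀ is a critical point of W (i.e. W′(x₀) = 0) and W has a local minimum at x₀; in particular the relative shift δ does not depend on λ. -/

import Mathlib

/-- For the cubic `W x = x * V x`, where
`V x = λ^(2M+2)·F + λ^(2M)·G·(x − λX)²` is the harmonic approximation near the
minimum `λX`, the point `x₀ = λ·(1+δ)·X` with
`δ = −F/(G·X² + X·√(G²·X² − 3·F·G))` is a critical point of `W` and a local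
minimum of `W`; the relative shift `δ` does not depend on `λ`. -/
theorem stmt0 (M : ℕ) (F G X lam : ℝ) (hG : 0 < G) (hX : 0 < X) (hlam : 0 < lam)
    (hFG : 3 * F < G * X ^ 2)
    (V W : ℝ → ℝ)
    (hV : ∀ x, V x = lam ^ (2 * M + 2) * F + lam ^ (2 * M) * G * (x - lam * X) ^ 2)
    (hW : ∀ x, W x = x * V x)
    (δ x₀ : ℝ)
    (hδ : δ = -F / (G * X ^ 2 + X * Real.sqrt (G ^ 2 * X ^ 2 - 3 * F * G)))
    (hx₀ : x₀ = lam * (1 + δ) * X) :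
    deriv W x₀ = 0 ∧ IsLocalMin W x₀ := by
  set a := lam ^ (2 * M) with ha
  have ha_pos : 0 < a := pow_pos hlam _
  set s := Real.sqrt (G ^ 2 * X ^ 2 - 3 * F * G) with hsdef
  have hpos : 0 < G ^ 2 * X ^ 2 - 3 * F * G := by nlinarith
  have hs2 : s ^ 2 = G ^ 2 * X ^ 2 - 3 * F * G := Real.sq_sqrt hpos.le
  have hs_pos : 0 < s := Real.sqrt_pos.mpr hpos
  have hD : 0 < G * X ^ 2 + X * s := by positivity
  have hδ2 : δ = (X * s - G * X ^ 2) / (3 * G * X ^ 2) := by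
    rw [hδ, div_eq_div_iff hD.ne' (by positivity)]
    linear_combination -X ^ 2 * hs2
  have hB : G * X * (1 + 3 * δ) = s := by
    rw [hδ2]; field_simp; ring
  have hq : 3 * G * X ^ 2 * δ ^ 2 + 2 * G * X ^ 2 * δ + F = 0 := by
    have h := hs2
    rw [← hB] at h
    have : 3 * G * (3 * G * X ^ 2 * δ ^ 2 + 2 * G * X ^ 2 * δ + F) = 0 := by
      linear_combination h
    have h3G : (3 : ℝ) * G ≠ 0 := by positivity
    exact (mul_eq_zero.mp this).resolve_left h3G
  have hpow2 : lam ^ (2 * M + 2) = a * lam ^ 2 := by rw [ha, pow_add]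
  have key : ∀ x, W x = W x₀ + (x - x₀) ^ 2 * (a * G * (x - x₀) + a * lam * s) := by
    intro x
    rw [hW, hW x₀, hV, hV, hpow2, hx₀, ← hB]
    linear_combination (a * lam ^ 2 * (x - lam * (1 + δ) * X)) * hq
  have hd : HasDerivAt W 0 x₀ := by
    have hWf : W = fun x => W x₀ + (x - x₀) ^ 2 * (a * G * (x - x₀) + a * lam * s) :=
      funext key
    rw [hWf]
    have h1 : HasDerivAt (fun x : ℝ => (x - x₀) ^ 2) (2 * (x₀ - x₀)) x₀ := by
      simpa using ((hasDerivAt_id x₀).sub_const x₀).fun_pow 2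
    have h2 : HasDerivAt (fun x : ℝ => a * G * (x - x₀) + a * lam * s) (a * G) x₀ := by
      simpa using (((hasDerivAt_id x₀).sub_const x₀).const_mul (a * G)).add_const (a * lam * s)
    have h3 := (h1.mul h2).const_add (W x₀)
    simpa using h3
  have hcont : ContinuousAt (fun x : ℝ => a * G * (x - x₀) + a * lam * s) x₀ := by
    fun_prop
  have hval : (0 : ℝ) < a * G * (x₀ - x₀) + a * lam * s := by
    simp; positivity
  have hev : ∀ᶠ x in nhds x₀, 0 < a * G * (x - x₀) + a * lam * s :=
    hcont.eventually (eventually_gt_nhds hval)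
  refine ⟨hd.deriv, ?_⟩
  filter_upwards [hev] with x hx
  rw [key x]
  nlinarith [sq_nonneg (x - x₀), hx]
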